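/- If G is a 3-colourable graph with no independent set on 4 vertices (4P_1-free), then ioct(G) = oct(G). -/
import Mathlib


open SimpleGraph

/-- `S` is an independent set of `G`. -/
def IsIS {V : Type*} (G : SimpleGraph V) (S : Set V) : Prop :=
  S.Pairwise fun u v => ¬ G.Adj u v

/-- `G` contains no induced subgraph isomorphic to `H`. -/
def HFree {W V : Type*} (H : SimpleGraph W) (G : SimpleGraph V) : Prop :=
  IsEmpty (H ↪g G)

/-- `G` is bipartite: the vertex set splits into two independent sets. -/
def IsBip {V : Type*} (G : SimpleGraph V) : Prop :=
  ∃ X : Set V, IsIS G X ∧ IsIS G Xᶜ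

/-- `S` is a vertex cover of `G`. -/
def IsVC {V : Type*} (G : SimpleGraph V) (S : Finset V) : Prop :=
  ∀ ⦃u v⦄, G.Adj u v → u ∈ S ∨ v ∈ S

/-- minimum size of a vertex cover. -/
noncomputable def vc {V : Type*} (G : SimpleGraph V) : ℕ :=
  sInf {n | ∃ S : Finset V, IsVC G S ∧ S.card = n}

/-- minimum size of an independent vertex cover. -/
noncomputable def ivc {V : Type*} (G : SimpleGraph V) : ℕ :=
  sInf {n | ∃ S : Finset V, IsVC G S ∧ IsIS G ↑S ∧ S.card = n}

/-- `S` is an odd cycle transversal of `G`: removing it leaves a bipartite graph. -/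
def IsOCT {V : Type*} (G : SimpleGraph V) (S : Finset V) : Prop :=
  (G.induce ((S : Set V)ᶜ)).Colorable 2

/-- minimum size of an odd cycle transversal. -/
noncomputable def oct {V : Type*} (G : SimpleGraph V) : ℕ :=
  sInf {n | ∃ S : Finset V, IsOCT G S ∧ S.card = n}

/-- minimum size of an independent odd cycle transversal. -/
noncomputable def ioct {V : Type*} (G : SimpleGraph V) : ℕ :=
  sInf {n | ∃ S : Finset V, IsOCT G S ∧ IsIS G ↑S ∧ S.card = n}

theorem stmt_18 {V : Type*} [Fintype V] (G : SimpleGraph V)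
    (hcol : G.Colorable 3) (hfree : ∀ S : Finset V, IsIS G ↑S → S.card < 4) :
    ioct G = oct G := by
  classical
  obtain ⟨c⟩ := hcol
  set C : Fin 3 → Finset V := fun i => Finset.univ.filter (fun v => c v = i) with hC
  have hCmem : ∀ i v, v ∈ C i ↔ c v = i := by
    intro i v; simp [hC]
  have hCIS : ∀ i, IsIS G ↑(C i) := by
    intro i u hu v hv huv hadj
    rw [Finset.mem_coe, hCmem] at hu hv
    exact c.valid hadj (hu.trans hv.symm)
  have key : ∀ i x y : Fin 3, x ≠ y → x ≠ i → y ≠ i →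
      (if x = i + 1 then (0 : Fin 2) else 1) ≠ (if y = i + 1 then 0 else 1) := by decide
  have hCOCT : ∀ i, IsOCT G (C i) := by
    intro i
    refine ⟨Coloring.mk (fun v => if c v.1 = i + 1 then (0 : Fin 2) else 1) ?_⟩
    rintro ⟨u, hu⟩ ⟨v, hv⟩ hadj
    have hu' : c u ≠ i := by
      intro h; exact hu ((hCmem i u).2 h)
    have hv' : c v ≠ i := by
      intro h; exact hv ((hCmem i v).2 h)
    exact key i (c u) (c v) (c.valid hadj) hu' hv'
  have hioct_mem : ∀ i, (C i).card ∈ {n | ∃ S : Finset V, IsOCT G S ∧ IsIS G ↑S ∧ S.card = n} :=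
    fun i => ⟨C i, hCOCT i, hCIS i, rfl⟩
  have hne_i : {n | ∃ S : Finset V, IsOCT G S ∧ IsIS G ↑S ∧ S.card = n}.Nonempty :=
    ⟨_, hioct_mem 0⟩
  have hne_o : {n | ∃ S : Finset V, IsOCT G S ∧ S.card = n}.Nonempty :=
    ⟨_, C 0, hCOCT 0, rfl⟩
  have h1 : oct G ≤ ioct G := by
    obtain ⟨S, hS, _, hcard⟩ := Nat.sInf_mem hne_i
    calc oct G ≤ S.card := Nat.sInf_le ⟨S, hS, rfl⟩
    _ = ioct G := hcard
  have h2 : ioct G ≤ oct G := by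
    obtain ⟨S, hS, hcard⟩ := Nat.sInf_mem hne_o
    by_cases hsmall : S.card ≤ 1
    · have hSI : IsIS G ↑S := by
        intro u hu v hv huv _
        have hsub : ({u, v} : Finset V) ⊆ S := by
          intro x hx
          rcases Finset.mem_insert.1 hx with h | h
          · exact h ▸ hu
          · exact (Finset.mem_singleton.1 h) ▸ hv
        have := Finset.card_le_card hsub
        rw [Finset.card_insert_of_notMem (by simpa using huv), Finset.card_singleton] at this
        omega
      calc ioct G ≤ S.card := Nat.sInf_le ⟨S, hS, hSI, rfl⟩
      _ = oct G := hcard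
    · obtain ⟨d⟩ := hS
      set A : Finset V := Finset.univ.filter
        (fun v => ∃ h : v ∈ ((S : Set V)ᶜ), d ⟨v, h⟩ = 0) with hA
      set B : Finset V := Finset.univ.filter
        (fun v => ∃ h : v ∈ ((S : Set V)ᶜ), d ⟨v, h⟩ = 1) with hB
      have hAI : IsIS G ↑A := by
        intro u hu v hv huv hadj
        rw [Finset.mem_coe, hA, Finset.mem_filter] at hu hv
        obtain ⟨hu1, hu2⟩ := hu.2
        obtain ⟨hv1, hv2⟩ := hv.2
        exact d.valid (show (G.induce ((S : Set V)ᶜ)).Adj ⟨u, hu1⟩ ⟨v, hv1⟩ from hadj)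
          (hu2.trans hv2.symm)
      have hBI : IsIS G ↑B := by
        intro u hu v hv huv hadj
        rw [Finset.mem_coe, hB, Finset.mem_filter] at hu hv
        obtain ⟨hu1, hu2⟩ := hu.2
        obtain ⟨hv1, hv2⟩ := hv.2
        exact d.valid (show (G.induce ((S : Set V)ᶜ)).Adj ⟨u, hu1⟩ ⟨v, hv1⟩ from hadj)
          (hu2.trans hv2.symm)
      have hcover : (Finset.univ : Finset V) ⊆ S ∪ A ∪ B := by
        intro v _
        by_cases hvS : v ∈ S
        · exact Finset.mem_union_left _ (Finset.mem_union_left _ hvS)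
        · have hv' : v ∈ ((S : Set V)ᶜ) := by simpa using hvS
          by_cases h0 : d ⟨v, hv'⟩ = 0
          · exact Finset.mem_union_left _ (Finset.mem_union_right _
              (Finset.mem_filter.2 ⟨Finset.mem_univ _, hv', h0⟩))
          · have h1' : d ⟨v, hv'⟩ = 1 := by omega
            exact Finset.mem_union_right _
              (Finset.mem_filter.2 ⟨Finset.mem_univ _, hv', h1'⟩)
      have hV : Fintype.card V ≤ S.card + 6 := by
        have hc1 := Finset.card_le_card hcover
        have hc2 := Finset.card_union_le (S ∪ A) B
        have hc3 := Finset.card_union_le S A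
        have hA4 := hfree A hAI
        have hB4 := hfree B hBI
        rw [Finset.card_univ] at hc1
        omega
      obtain ⟨i0, -, hmin⟩ := Finset.exists_min_image Finset.univ (fun i => (C i).card)
        ⟨0, Finset.mem_univ 0⟩
      have hsum : ∑ i, (C i).card = Fintype.card V := by
        rw [← Finset.card_univ]
        exact (Finset.card_eq_sum_card_fiberwise (f := c) (s := Finset.univ)
          (t := Finset.univ) (fun x _ => Finset.mem_univ _)).symm
      have h3m : 3 * (C i0).card ≤ Fintype.card V := by
        have := Finset.sum_le_sum (fun i (_ : i ∈ (Finset.univ : Finset (Fin 3))) =>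
          hmin i (Finset.mem_univ i))
        rw [hsum] at this
        simpa [Finset.sum_const, Finset.card_univ, mul_comm] using this
      have hle : (C i0).card ≤ S.card := by omega
      calc ioct G ≤ (C i0).card := Nat.sInf_le (hioct_mem i0)
      _ ≤ S.card := hle
      _ = oct G := hcard
  exact le_antisymm h2 h1
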